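/- For a unital positive linear map Φ on n×n matrices, positive definite matrices A₁,…,Aₘ, weights λ summing to 1, and μ > 0, one has Φ(R_μ(A,λ)) ≤ R_μ(Φ(A),λ), where Φ(A) = (Φ(A₁),…,Φ(Aₘ)). -/

import Mathlib

open Matrix
open scoped ComplexOrder

/-- The (parametrized) resolvent average `R_μ(A, w) = (∑ᵢ wᵢ (Aᵢ + μI)⁻¹)⁻¹ − μI`
of a family of matrices. -/
noncomputable def resAvg {n : Type*} [Fintype n] [DecidableEq n] {m : ℕ}
    (μ : ℝ) (A : Fin m → Matrix n n ℂ) (w : Fin m → ℝ) : Matrix n n ℂ :=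
  (∑ i, w i • (A i + μ • (1 : Matrix n n ℂ))⁻¹)⁻¹ - μ • (1 : Matrix n n ℂ)

namespace ResAvgAux

set_option linter.unusedSectionVars false
set_option linter.unusedVariables false
set_option maxHeartbeats 1000000
open scoped MatrixOrder

variable {n : Type*} [Fintype n] [DecidableEq n]

lemma real_smul_eq (r : ℝ) (A : Matrix n n ℂ) : r • A = (r : ℂ) • A := by
  ext i j
  simp [Complex.real_smul]

lemma posSemidef_ofReal_smul {A : Matrix n n ℂ} (hA : A.PosSemidef) {r : ℝ} (hr : 0 ≤ r) :
    ((r : ℂ) • A).PosSemidef := by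
  constructor
  · show ((r : ℂ) • A)ᴴ = (r : ℂ) • A
    rw [conjTranspose_smul, Complex.star_def, Complex.conj_ofReal, hA.1.eq]
  · intro x
    exact (hA.smul (Complex.zero_le_real.mpr hr)).2 x

lemma posDef_ofReal_smul {A : Matrix n n ℂ} (hA : A.PosDef) {r : ℝ} (hr : 0 < r) :
    ((r : ℂ) • A).PosDef := by
  refine ⟨(posSemidef_ofReal_smul hA.posSemidef hr.le).1, fun x hx => ?_⟩
  exact (hA.smul (Complex.zero_lt_real.mpr hr)).2 hx

lemma posSemidef_sum {ι : Type*} (s : Finset ι) (f : ι → Matrix n n ℂ)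
    (h : ∀ i ∈ s, (f i).PosSemidef) : (∑ i ∈ s, f i).PosSemidef :=
  Finset.sum_induction f _ (fun _ _ ha hb => ha.add hb) .zero h

lemma posDef_of_posSemidef_det_ne_zero {R : Matrix n n ℂ} (h : R.PosSemidef)
    (hd : R.det ≠ 0) : R.PosDef := by
  refine posDef_iff_dotProduct_mulVec.mpr ⟨h.1, fun x hx => ?_⟩
  rcases (h.dotProduct_mulVec_nonneg x).lt_or_eq with hlt | heq
  · exact hlt
  · exfalso
    have hR0 : R *ᵥ x = 0 := (h.dotProduct_mulVec_zero_iff x).mp heq.symm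
    have hinj : Function.Injective R.mulVec :=
      Matrix.mulVec_injective_iff_isUnit.mpr ((isUnit_iff_isUnit_det _).mpr hd.isUnit)
    exact hx (hinj (by simpa using hR0))

/-- Kadison's inequality: a unital positive linear map on matrices satisfies
`Φ(Y²) ≥ Φ(Y)²` for Hermitian `Y`. -/
lemma kadison (Φ : Matrix n n ℂ →ₗ[ℂ] Matrix n n ℂ)
    (hΦpos : ∀ X : Matrix n n ℂ, X.PosSemidef → (Φ X).PosSemidef)
    (hΦ1 : Φ 1 = 1) {Y : Matrix n n ℂ} (hY : Y.IsHermitian) :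
    (Φ (Y * Y) - Φ Y * Φ Y).PosSemidef := by
  classical
  set U : Matrix n n ℂ := (hY.eigenvectorUnitary : Matrix n n ℂ) with hU
  have hU1 : U * star U = 1 := Matrix.mem_unitaryGroup_iff.mp hY.eigenvectorUnitary.2
  have hU2 : star U * U = 1 := Matrix.mem_unitaryGroup_iff'.mp hY.eigenvectorUnitary.2
  set d : n → ℝ := hY.eigenvalues with hd
  set E : n → Matrix n n ℂ := fun j => diagonal (Pi.single j 1) with hE
  have hdiag : ∀ f : n → ℂ, diagonal f = ∑ j, f j • E j := by
    intro f
    ext i k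
    simp only [hE, diagonal_apply, Finset.sum_apply, Matrix.sum_apply, Matrix.smul_apply,
      Pi.single_apply, smul_eq_mul, mul_ite, mul_one, mul_zero]
    by_cases hik : i = k
    · subst hik; simp
    · simp [hik]
  set P : n → Matrix n n ℂ := fun j => U * E j * star U with hP
  have hPpos : ∀ j, (P j).PosSemidef := by
    intro j
    have hEpos : (E j).PosSemidef := by
      refine PosSemidef.diagonal ?_
      intro k
      rcases eq_or_ne k j with h | h <;> simp [Pi.single_apply, h]
    have := hEpos.mul_mul_conjTranspose_same U
    simpa [hP, Matrix.star_eq_conjTranspose] using this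
  have hEsum : ∑ j, E j = (1 : Matrix n n ℂ) := by
    have h1 := (hdiag (fun _ => (1 : ℂ))).symm
    simpa using h1
  have hPsum : ∑ j, P j = 1 := by
    simp only [hP]
    rw [← Finset.sum_mul, ← Finset.mul_sum, hEsum, mul_one, hU1]
  have hspec : Y = U * diagonal (RCLike.ofReal ∘ d) * star U := hY.spectral_theorem
  have hYsum : Y = ∑ j, (d j : ℂ) • P j := by
    calc Y = U * diagonal (RCLike.ofReal ∘ d) * star U := hspec
    _ = U * (∑ j, (d j : ℂ) • E j) * star U := by rw [← hdiag]; rfl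
    _ = ∑ j, (d j : ℂ) • P j := by
        rw [Finset.mul_sum, Finset.sum_mul]
        refine Finset.sum_congr rfl fun j _ => ?_
        simp [hP, mul_smul_comm, smul_mul_assoc, Matrix.mul_assoc]
  have hU2' : ∀ X : Matrix n n ℂ, star U * (U * X) = X := fun X => by
    rw [← Matrix.mul_assoc, hU2, Matrix.one_mul]
  have hY2sum : Y * Y = ∑ j, ((d j : ℂ) * (d j : ℂ)) • P j := by
    have hDD : Y * Y = U * diagonal (fun k => (d k : ℂ) * (d k : ℂ)) * star U := by
      have hdd : diagonal (RCLike.ofReal ∘ d) * diagonal (RCLike.ofReal ∘ d)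
          = diagonal (fun k => (d k : ℂ) * (d k : ℂ)) := by
        rw [diagonal_mul_diagonal]; rfl
      conv_lhs => rw [hspec]
      rw [← hdd]
      simp only [Matrix.mul_assoc, hU2']
    calc Y * Y = U * diagonal (fun k => (d k : ℂ) * (d k : ℂ)) * star U := hDD
    _ = U * (∑ j, ((d j : ℂ) * (d j : ℂ)) • E j) * star U := by rw [← hdiag]
    _ = ∑ j, ((d j : ℂ) * (d j : ℂ)) • P j := by
        rw [Finset.mul_sum, Finset.sum_mul]
        refine Finset.sum_congr rfl fun j _ => ?_
        simp [hP, mul_smul_comm, smul_mul_assoc, Matrix.mul_assoc]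
  set Q : n → Matrix n n ℂ := fun j => Φ (P j) with hQ
  have hQpos : ∀ j, (Q j).PosSemidef := fun j => hΦpos _ (hPpos j)
  have hQsum : ∑ j, Q j = 1 := by rw [hQ, ← map_sum, hPsum, hΦ1]
  set T : Matrix n n ℂ := Φ Y with hT
  have hTsum : T = ∑ j, (d j : ℂ) • Q j := by
    rw [hT, hYsum, map_sum]; simp [hQ]
  have hY2T : Φ (Y * Y) = ∑ j, ((d j : ℂ) * (d j : ℂ)) • Q j := by
    rw [hY2sum, map_sum]; simp [hQ]
  have hTH : Tᴴ = T := by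
    rw [hTsum, conjTranspose_sum]
    refine Finset.sum_congr rfl fun j _ => ?_
    rw [conjTranspose_smul, Complex.star_def, Complex.conj_ofReal, (hQpos j).1.eq]
  have key : Φ (Y * Y) - T * T =
      ∑ j, ((d j : ℂ) • (1 : Matrix n n ℂ) - T) * Q j * ((d j : ℂ) • (1 : Matrix n n ℂ) - T)ᴴ := by
    have hMH : ∀ j, ((d j : ℂ) • (1 : Matrix n n ℂ) - T)ᴴ
        = (d j : ℂ) • (1 : Matrix n n ℂ) - T := by
      intro j
      rw [conjTranspose_sub, conjTranspose_smul, Complex.star_def, Complex.conj_ofReal,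
        conjTranspose_one, hTH]
    have hexp : ∀ j, ((d j : ℂ) • (1 : Matrix n n ℂ) - T) * Q j *
        ((d j : ℂ) • (1 : Matrix n n ℂ) - T)ᴴ =
        ((d j : ℂ) * (d j : ℂ)) • Q j - (T * ((d j : ℂ) • Q j) + ((d j : ℂ) • Q j) * T)
          + T * Q j * T := by
      intro j
      rw [hMH j]
      simp only [sub_mul, mul_sub, smul_mul_assoc, mul_smul_comm, one_mul, mul_one, smul_smul,
        smul_sub, smul_add]
      abel
    rw [Finset.sum_congr rfl fun j _ => hexp j]
    rw [Finset.sum_add_distrib, Finset.sum_sub_distrib, Finset.sum_add_distrib,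
      ← Finset.mul_sum, ← Finset.sum_mul, ← hTsum, ← hY2T]
    have hTQT : ∑ j, T * Q j * T = T * (∑ j, Q j) * T := by
      rw [Finset.mul_sum, Finset.sum_mul]
    rw [hTQT, hQsum, Matrix.mul_one]
    abel
  rw [key]
  exact posSemidef_sum _ _ fun j _ => (hQpos j).mul_mul_conjTranspose_same _

/-- The Lieb–Ruskai/Choi-type inequality `Φ(X B⁻¹ X) ≥ Φ(X) Φ(B)⁻¹ Φ(X)` for a unital
positive linear map `Φ`, a Hermitian `X`, and positive definite `B` with `Φ(B)` positive
definite. -/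
lemma lieb_ruskai (Φ : Matrix n n ℂ →ₗ[ℂ] Matrix n n ℂ)
    (hΦpos : ∀ X : Matrix n n ℂ, X.PosSemidef → (Φ X).PosSemidef)
    (hΦ1 : Φ 1 = 1) {X B : Matrix n n ℂ} (hX : X.IsHermitian) (hB : B.PosDef)
    (hΦB : (Φ B).PosDef) :
    (Φ (X * B⁻¹ * X) - Φ X * (Φ B)⁻¹ * Φ X).PosSemidef := by
  classical
  set R : Matrix n n ℂ := CFC.sqrt B with hRdef
  have hRps : R.PosSemidef := (CFC.sqrt_nonneg B).posSemidef
  have hRR : R * R = B := CFC.sqrt_mul_sqrt_self B hB.posSemidef.nonneg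
  have hRd0 : R.det ≠ 0 := by
    intro h
    apply hB.det_pos.ne'
    rw [← hRR, det_mul, h, mul_zero]
  have hRpd : R.PosDef := posDef_of_posSemidef_det_ne_zero hRps hRd0
  have hRi1 : R * R⁻¹ = 1 := Matrix.mul_nonsing_inv _ hRd0.isUnit
  have hRi2 : R⁻¹ * R = 1 := Matrix.nonsing_inv_mul _ hRd0.isUnit
  have hRc : ∀ W : Matrix n n ℂ, R * (R⁻¹ * W) = W := fun W => by
    rw [← Matrix.mul_assoc, hRi1, Matrix.one_mul]
  have hRc' : ∀ W : Matrix n n ℂ, R⁻¹ * (R * W) = W := fun W => by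
    rw [← Matrix.mul_assoc, hRi2, Matrix.one_mul]
  set S : Matrix n n ℂ := CFC.sqrt (Φ B) with hSdef
  have hSps : S.PosSemidef := (CFC.sqrt_nonneg (Φ B)).posSemidef
  have hSS : S * S = Φ B := CFC.sqrt_mul_sqrt_self (Φ B) hΦB.posSemidef.nonneg
  have hSd0 : S.det ≠ 0 := by
    intro h
    apply hΦB.det_pos.ne'
    rw [← hSS, det_mul, h, mul_zero]
  have hSpd : S.PosDef := posDef_of_posSemidef_det_ne_zero hSps hSd0
  have hSi1 : S * S⁻¹ = 1 := Matrix.mul_nonsing_inv _ hSd0.isUnit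
  have hSi2 : S⁻¹ * S = 1 := Matrix.nonsing_inv_mul _ hSd0.isUnit
  have hSc : ∀ W : Matrix n n ℂ, S * (S⁻¹ * W) = W := fun W => by
    rw [← Matrix.mul_assoc, hSi1, Matrix.one_mul]
  have hSc' : ∀ W : Matrix n n ℂ, S⁻¹ * (S * W) = W := fun W => by
    rw [← Matrix.mul_assoc, hSi2, Matrix.one_mul]
  set Ψ : Matrix n n ℂ →ₗ[ℂ] Matrix n n ℂ :=
    { toFun := fun Z => S⁻¹ * Φ (R * Z * R) * S⁻¹
      map_add' := fun Z W => by
        simp only [Matrix.mul_add, Matrix.add_mul, map_add]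
      map_smul' := fun c Z => by
        simp only [mul_smul_comm, smul_mul_assoc, _root_.map_smul, RingHom.id_apply] }
    with hΨdef
  have hΨapp : ∀ Z, Ψ Z = S⁻¹ * Φ (R * Z * R) * S⁻¹ := fun Z => rfl
  have hΨpos : ∀ Z : Matrix n n ℂ, Z.PosSemidef → (Ψ Z).PosSemidef := by
    intro Z hZ
    rw [hΨapp]
    have h1 : (R * Z * R).PosSemidef := by
      have := hZ.mul_mul_conjTranspose_same R
      rwa [hRps.1.eq] at this
    have h2 := (hΦpos _ h1).mul_mul_conjTranspose_same S⁻¹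
    rwa [hSpd.inv.1.eq] at h2
  have hΨ1 : Ψ 1 = 1 := by
    rw [hΨapp, Matrix.mul_one, hRR, ← hSS, hSc', hSi1]
  set Y : Matrix n n ℂ := R⁻¹ * X * R⁻¹ with hYdef
  have hYH : Y.IsHermitian := by
    show Yᴴ = Y
    rw [hYdef]
    simp only [conjTranspose_mul, hX.eq, hRpd.inv.1.eq, Matrix.mul_assoc]
  have hkad := kadison Ψ hΨpos hΨ1 hYH
  have hRYR : R * Y * R = X := by
    rw [hYdef]
    simp only [Matrix.mul_assoc, hRc, hRc', hRi2, Matrix.mul_one]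
  have hY2 : R * (Y * Y) * R = X * B⁻¹ * X := by
    rw [hYdef, ← hRR, Matrix.mul_inv_rev]
    simp only [Matrix.mul_assoc, hRc, hRc', hRi2, Matrix.mul_one]
  rw [hΨapp, hΨapp, hRYR, hY2] at hkad
  have hconj := hkad.mul_mul_conjTranspose_same S
  have hΦBinv : (Φ B)⁻¹ = S⁻¹ * S⁻¹ := by rw [← hSS, Matrix.mul_inv_rev]
  have hgoal : S * ((S⁻¹ * Φ (X * B⁻¹ * X) * S⁻¹) -
      (S⁻¹ * Φ X * S⁻¹) * (S⁻¹ * Φ X * S⁻¹)) * Sᴴ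
      = Φ (X * B⁻¹ * X) - Φ X * (Φ B)⁻¹ * Φ X := by
    have h1 : S * (S⁻¹ * Φ (X * B⁻¹ * X) * S⁻¹) * S = Φ (X * B⁻¹ * X) := by
      simp only [Matrix.mul_assoc, hSc, hSc', hSi2, Matrix.mul_one]
    have h2 : S * ((S⁻¹ * Φ X * S⁻¹) * (S⁻¹ * Φ X * S⁻¹)) * S = Φ X * (Φ B)⁻¹ * Φ X := by
      rw [hΦBinv]
      simp only [Matrix.mul_assoc, hSc, hSc', hSi2, Matrix.mul_one]
    rw [hSps.1.eq, Matrix.mul_sub, Matrix.sub_mul, h1, h2]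
  rwa [hgoal] at hconj

end ResAvgAux

open ResAvgAux

/-- For a unital positive linear map `Φ`: `Φ(R_μ(A,w)) ≤ R_μ(Φ(A),w)` (Loewner order). -/
theorem map_resAvg_le {n : Type*} [Fintype n] [DecidableEq n] {m : ℕ}
    (Φ : Matrix n n ℂ →ₗ[ℂ] Matrix n n ℂ)
    (hΦpos : ∀ X : Matrix n n ℂ, X.PosSemidef → (Φ X).PosSemidef)
    (hΦ1 : Φ 1 = 1)
    (A : Fin m → Matrix n n ℂ) (hA : ∀ i, (A i).PosDef)
    (w : Fin m → ℝ) (hw : ∀ i, 0 ≤ w i) (hw1 : ∑ i, w i = 1) (μ : ℝ) (hμ : 0 < μ) :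
    (resAvg μ (fun i => Φ (A i)) w - Φ (resAvg μ A w)).PosSemidef := by
  classical
  set B : Fin m → Matrix n n ℂ := fun i => A i + (μ : ℂ) • 1 with hBdef
  have hμ1 : ((μ : ℂ) • (1 : Matrix n n ℂ)).PosDef := posDef_ofReal_smul Matrix.PosDef.one hμ
  have hB : ∀ i, (B i).PosDef := fun i => (hA i).add_posSemidef hμ1.posSemidef
  have hΦB : ∀ i, Φ (B i) = Φ (A i) + (μ : ℂ) • 1 := fun i => by
    show Φ (A i + (μ : ℂ) • 1) = _
    rw [map_add, _root_.map_smul, hΦ1]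
  have hΦBpd : ∀ i, (Φ (B i)).PosDef := fun i => by
    rw [hΦB i]
    exact Matrix.PosDef.posSemidef_add (hΦpos _ (hA i).posSemidef) hμ1
  set C : Matrix n n ℂ := ∑ i, (w i : ℂ) • (B i)⁻¹ with hCdef
  set K : Matrix n n ℂ := ∑ i, (w i : ℂ) • (Φ (B i))⁻¹ with hKdef
  obtain ⟨i₀, hi₀⟩ : ∃ i, w i ≠ 0 := by
    by_contra h
    push_neg at h
    rw [Finset.sum_eq_zero (fun i _ => h i)] at hw1
    exact one_ne_zero hw1.symm
  have hsumpd : ∀ (M : Fin m → Matrix n n ℂ), (∀ i, (M i).PosDef) →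
      (∑ i, (w i : ℂ) • M i).PosDef := by
    intro M hM
    rw [← Finset.add_sum_erase _ _ (Finset.mem_univ i₀)]
    refine (posDef_ofReal_smul (hM i₀) ((hw i₀).lt_of_ne (Ne.symm hi₀))).add_posSemidef ?_
    exact posSemidef_sum _ _ fun i _ => posSemidef_ofReal_smul (hM i).posSemidef (hw i)
  have hCpd : C.PosDef := hsumpd _ fun i => (hB i).inv
  have hKpd : K.PosDef := hsumpd _ fun i => (hΦBpd i).inv
  set H : Matrix n n ℂ := C⁻¹ with hHdef
  have hHpd : H.PosDef := hCpd.inv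
  set G : Matrix n n ℂ := Φ H with hGdef
  have hGps : G.PosSemidef := hΦpos _ hHpd.posSemidef
  have hGH : Gᴴ = G := hGps.1.eq
  have hKi1 : K * K⁻¹ = 1 := Matrix.mul_nonsing_inv _ hKpd.det_pos.ne'.isUnit
  have hKi2 : K⁻¹ * K = 1 := Matrix.nonsing_inv_mul _ hKpd.det_pos.ne'.isUnit
  have hCi2 : C⁻¹ * C = 1 := Matrix.nonsing_inv_mul _ hCpd.det_pos.ne'.isUnit
  -- rewrite the two resolvent averages
  have hres1 : resAvg μ A w = H - (μ : ℂ) • 1 := by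
    unfold resAvg
    simp only [real_smul_eq]
    rfl
  have hres2 : resAvg μ (fun i => Φ (A i)) w = K⁻¹ - (μ : ℂ) • 1 := by
    unfold resAvg
    simp only [real_smul_eq]
    have he : ∀ i, Φ (A i) + (μ : ℂ) • (1 : Matrix n n ℂ) = Φ (B i) := fun i => (hΦB i).symm
    simp only [he]
    rfl
  have hgoal_eq : resAvg μ (fun i => Φ (A i)) w - Φ (resAvg μ A w) = K⁻¹ - G := by
    rw [hres1, hres2, map_sub, _root_.map_smul, hΦ1, ← hGdef, sub_sub_sub_cancel_right]
  -- the summation identities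
  have hHCH : ∑ i, (w i : ℂ) • (H * (B i)⁻¹ * H) = H := by
    have e1 : ∀ i, (w i : ℂ) • (H * (B i)⁻¹ * H) = H * ((w i : ℂ) • (B i)⁻¹) * H := by
      intro i
      simp only [mul_smul_comm, smul_mul_assoc]
    rw [Finset.sum_congr rfl fun i _ => e1 i, ← Finset.sum_mul, ← Finset.mul_sum, ← hCdef,
      hHdef, hCi2, Matrix.one_mul]
  have hGKG : ∑ i, (w i : ℂ) • (G * (Φ (B i))⁻¹ * G) = G * K * G := by
    have e1 : ∀ i, (w i : ℂ) • (G * (Φ (B i))⁻¹ * G) = G * ((w i : ℂ) • (Φ (B i))⁻¹) * G := by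
      intro i
      simp only [mul_smul_comm, smul_mul_assoc]
    rw [Finset.sum_congr rfl fun i _ => e1 i, ← Finset.sum_mul, ← Finset.mul_sum, ← hKdef]
  have hsum_psd : (G - G * K * G).PosSemidef := by
    have hrepr : G - G * K * G
        = ∑ i, (w i : ℂ) • (Φ (H * (B i)⁻¹ * H) - G * (Φ (B i))⁻¹ * G) := by
      rw [Finset.sum_congr rfl fun i _ => smul_sub ((w i : ℂ)) _ _, Finset.sum_sub_distrib,
        hGKG]
      have hfirst : ∑ i, (w i : ℂ) • Φ (H * (B i)⁻¹ * H) = G := by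
        have : ∑ i, (w i : ℂ) • Φ (H * (B i)⁻¹ * H)
            = Φ (∑ i, (w i : ℂ) • (H * (B i)⁻¹ * H)) := by
          rw [map_sum]
          exact Finset.sum_congr rfl fun i _ => (_root_.map_smul Φ _ _).symm
        rw [this, hHCH, ← hGdef]
      rw [hfirst]
    rw [hrepr]
    refine posSemidef_sum _ _ fun i _ => posSemidef_ofReal_smul ?_ (hw i)
    exact lieb_ruskai Φ hΦpos hΦ1 hHpd.1 (hB i) (hΦBpd i)
  have hM : (K⁻¹ - G)ᴴ = K⁻¹ - G := by
    rw [conjTranspose_sub, hGH, hKpd.inv.1.eq]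
  have hconj : ((K⁻¹ - G) * K * (K⁻¹ - G)ᴴ).PosSemidef :=
    hKpd.posSemidef.mul_mul_conjTranspose_same _
  have hid : K⁻¹ - G = (K⁻¹ - G) * K * (K⁻¹ - G)ᴴ + (G - G * K * G) := by
    rw [hM]
    have e : (K⁻¹ - G) * K * (K⁻¹ - G) = K⁻¹ - G - (G - G * K * G) := by
      rw [Matrix.sub_mul, hKi2, Matrix.sub_mul, Matrix.one_mul, Matrix.mul_sub,
        Matrix.mul_assoc G K K⁻¹, hKi1, Matrix.mul_one]
    rw [e]
    abel
  rw [hgoal_eq, hid]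
  exact hconj.add hsum_psd
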